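/- arXiv:1704.02804 — 2 statements merged into one kernel-verified Lean document; each statement's English description precedes it below -/
import Mathlib

section
/- For every integer m ≥ 1 one has the identity of bounded operators on ℓ²(W): h ∘ h_m = h_m ∘ h = h_{m+1} + p·h_m + (L_m − 1)·h_{m−1}, where L_1 = L + 1 and L_m = L for m ≥ 2 (and h_0 = 1). In particular h² = h_2 + p·h + L·1. -/
noncomputable section

open scoped ComplexInnerProductSpace

namespace UCoxMasa

/-- The universal Coxeter matrix on `Fin L`: all off-diagonal entries are `0` (representing ∞). -/
def Mat (L : ℕ) : CoxeterMatrix (Fin L) where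
  M := fun i j => if i = j then 1 else 0
  isSymm := by
    ext i j
    by_cases h : i = j <;> simp [Matrix.transpose, h, eq_comm]
  diagonal := fun i => by simp
  off_diagonal := fun i j h => by simp [h]

/-- The universal Coxeter group on `L` generators: free product of `L` copies of `ℤ/2ℤ`. -/
abbrev W (L : ℕ) : Type := (Mat L).Group

/-- The distinguished Coxeter system of `W L`. -/
def cs (L : ℕ) : CoxeterSystem (Mat L) (W L) := CoxeterMatrix.toCoxeterSystem (Mat L)

/-- The simple reflection associated to `i : Fin L`. -/
def σ {L : ℕ} (i : Fin L) : W L := (cs L).simple i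

/-- Word length on `W L` with respect to the generating set of simple reflections. -/
def len {L : ℕ} (w : W L) : ℕ := (cs L).length w

/-- The Hilbert space `ℓ²(W)`. -/
abbrev H (L : ℕ) : Type := lp (fun _ : W L => ℂ) 2

/-- The standard orthonormal basis vector `δ_w` of `ℓ²(W)`. -/
def δ {L : ℕ} (w : W L) : H L :=
  letI := Classical.decEq (W L)
  lp.single 2 w 1

/-- `V l`: the linear span of `{δ_w : ℓ(w) = l}`. -/
def V (L : ℕ) (l : ℕ) : Submodule ℂ (H L) :=
  Submodule.span ℂ {x : H L | ∃ w : W L, len w = l ∧ x = δ w}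

/-- `S_l`: the linear span of `q_l(h V_{l-1}) ∪ q_l(R_h V_{l-1})`,
given the projections `Q`, the operator `h` and the right operator `Rh`. -/
def Sl (L : ℕ) (Q : ℕ → (H L →L[ℂ] H L)) (h Rh : H L →L[ℂ] H L) (l : ℕ) :
    Submodule ℂ (H L) :=
  Submodule.span ℂ
    ({x : H L | ∃ y ∈ V L (l - 1), x = Q l (h y)} ∪
      {x : H L | ∃ y ∈ V L (l - 1), x = Q l (Rh y)})

end UCoxMasa


namespace UCoxMasa

variable {L : ℕ}

/-- Reduced lists: no two adjacent letters equal. -/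
def R (L : ℕ) : Type := {l : List (Fin L) // l.Chain' (· ≠ ·)}

def pf (i : Fin L) : R L → R L
  | ⟨[], _⟩ => ⟨[i], List.isChain_singleton i⟩
  | ⟨j :: t, h⟩ =>
    if hij : i = j then ⟨t, h.tail⟩
    else ⟨i :: j :: t, h.cons (by simpa using hij)⟩

lemma pf_invol (i : Fin L) : Function.Involutive (pf i) := by
  rintro ⟨l, hl⟩
  match l, hl with
  | [], _ => simp [pf]; rfl
  | j :: t, h =>
    by_cases hij : i = j
    · subst hij
      simp only [pf, dif_pos rfl]
      match t, h.tail with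
      | [], _ => simp [pf]; rfl
      | k :: u, h2 =>
        have : ¬ i = k := by
          have := h.rel_head
          simpa using this
        simp [pf, this]; rfl
    · simp [pf, hij]; rfl

def phi (i : Fin L) : Equiv.Perm (R L) := (pf_invol i).toPerm

lemma phi_liftable : CoxeterMatrix.IsLiftable (Mat L) (phi (L := L)) := by
  intro i j
  by_cases h : i = j
  · subst h
    have : (Mat L).M i i = 1 := (Mat L).diagonal i
    rw [this, pow_one]
    ext x
    exact pf_invol i x
  · have : (Mat L).M i j = 0 := by simp [Mat, CoxeterMatrix.M, h]
    rw [this, pow_zero]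

/-- The normal-form homomorphism. -/
def θ : W L →* Equiv.Perm (R L) := (cs L).lift ⟨phi, phi_liftable⟩

@[simp] lemma θ_simple (i : Fin L) : θ (σ i) = phi i := (cs L).lift_apply_simple phi_liftable i

def emptyR : R L := ⟨[], List.isChain_nil⟩

/-- Normal form of a group element. -/
def nf (w : W L) : R L := θ w emptyR

@[simp] lemma nf_one : nf (1 : W L) = emptyR := by simp [nf]

lemma nf_simple_mul (i : Fin L) (w : W L) : nf (σ i * w) = pf i (nf w) := by
  simp [nf, map_mul]
  rfl


lemma wordProd_pf (i : Fin L) (l : R L) :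
    (cs L).wordProd (pf i l).1 = σ i * (cs L).wordProd l.1 := by
  obtain ⟨l, hl⟩ := l
  match l, hl with
  | [], _ => simp [pf, CoxeterSystem.wordProd_cons, σ]
  | j :: t, h =>
    by_cases hij : i = j
    · subst hij
      simp only [pf, dif_pos, reduceDIte]
      rw [CoxeterSystem.wordProd_cons, σ, (cs L).simple_mul_simple_cancel_left]
    · simp only [pf, hij, reduceDIte]
      rw [CoxeterSystem.wordProd_cons, CoxeterSystem.wordProd_cons, σ]

lemma wp_nf (w : W L) : (cs L).wordProd (nf w).1 = w := by
  obtain ⟨l, rfl⟩ := (cs L).wordProd_surjective w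
  induction l with
  | nil => simp [CoxeterSystem.wordProd_nil, emptyR]
  | cons i t ih =>
    rw [CoxeterSystem.wordProd_cons, ← σ, nf_simple_mul, wordProd_pf, ih]


lemma nf_wp : ∀ (l : List (Fin L)) (hl : l.Chain' (· ≠ ·)), nf ((cs L).wordProd l) = ⟨l, hl⟩ := by
  intro l
  induction l with
  | nil => intro _; simp [CoxeterSystem.wordProd_nil]; rfl
  | cons i t ih =>
    intro hl
    rw [CoxeterSystem.wordProd_cons, ← σ, nf_simple_mul, ih hl.tail]
    match t, hl with
    | [], _ => simp [pf]; rfl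
    | k :: u, hl =>
      have : ¬ i = k := by simpa using hl.rel_head
      simp [pf, this]; rfl

lemma nf_injective : Function.Injective (nf (L := L)) := by
  intro a b hab
  rw [← wp_nf a, ← wp_nf b, hab]

lemma length_pf_le (i : Fin L) (l : R L) : (pf i l).1.length ≤ l.1.length + 1 := by
  obtain ⟨l, hl⟩ := l
  match l, hl with
  | [], _ => simp [pf]
  | j :: t, h =>
    by_cases hij : i = j
    · subst hij; simp only [pf, dif_pos, reduceDIte]; simp; omega
    · simp [pf, hij]

lemma len_nf (w : W L) : len w = (nf w).1.length := by
  apply le_antisymm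
  · conv_lhs => rw [← wp_nf w]
    exact (cs L).length_wordProd_le (nf w).1
  · obtain ⟨l, hlen, rfl⟩ := (cs L).exists_reduced_word w
    have key : ∀ l : List (Fin L), (nf ((cs L).wordProd l)).1.length ≤ l.length := by
      intro l
      induction l with
      | nil => simp [CoxeterSystem.wordProd_nil, emptyR]
      | cons i t ih =>
        rw [CoxeterSystem.wordProd_cons, ← σ, nf_simple_mul]
        calc (pf i (nf ((cs L).wordProd t))).1.length
            ≤ (nf ((cs L).wordProd t)).1.length + 1 := length_pf_le _ _
          _ ≤ t.length + 1 := by omega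
          _ = (i :: t).length := rfl
    calc (nf ((cs L).wordProd l)).1.length ≤ l.length := key l
      _ = len ((cs L).wordProd l) := hlen.symm

/-- Head of the normal form. -/
def hd (w : W L) : Option (Fin L) := (nf w).1.head?

lemma pf_length_of_head (i : Fin L) (l : R L) (h : l.1.head? = some i) :
    (pf i l).1.length + 1 = l.1.length := by
  obtain ⟨l, hl⟩ := l
  match l, hl with
  | [], _ => simp at h
  | j :: t, hl =>
    have : i = j := by simpa using h.symm
    subst this
    simp [pf]

lemma pf_length_of_not_head (i : Fin L) (l : R L) (h : l.1.head? ≠ some i) :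
    (pf i l).1.length = l.1.length + 1 := by
  obtain ⟨l, hl⟩ := l
  match l, hl with
  | [], _ => simp [pf]
  | j :: t, hl =>
    have : ¬ i = j := by intro hh; subst hh; simp at h
    simp [pf, this]

lemma len_simple_mul_of_hd {i : Fin L} {w : W L} (h : hd w = some i) :
    len (σ i * w) + 1 = len w := by
  rw [len_nf, len_nf, nf_simple_mul]
  exact pf_length_of_head i (nf w) h

lemma len_simple_mul_of_not_hd {i : Fin L} {w : W L} (h : hd w ≠ some i) :
    len (σ i * w) = len w + 1 := by
  rw [len_nf, len_nf, nf_simple_mul]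
  exact pf_length_of_not_head i (nf w) h

lemma descent_iff {i : Fin L} {w : W L} : len (σ i * w) < len w ↔ hd w = some i := by
  constructor
  · intro hlt
    by_contra h
    rw [len_simple_mul_of_not_hd h] at hlt
    omega
  · intro h
    have := len_simple_mul_of_hd h
    omega


lemma len_one' : len (1 : W L) = 0 := (cs L).length_one

lemma len_eq_zero_iff {w : W L} : len w = 0 ↔ w = 1 := (cs L).length_eq_zero_iff

lemma hd_eq_none_iff {w : W L} : hd w = none ↔ w = 1 := by
  constructor
  · intro h
    have : (nf w).1 = [] := by
      cases hnf : (nf w).1 with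
      | nil => rfl
      | cons a t => rw [hd, hnf] at h; simp at h
    rw [← wp_nf w, this, CoxeterSystem.wordProd_nil]
  · rintro rfl
    rw [hd, nf_one]; rfl

lemma hd_isSome_of_ne_one {w : W L} (hw : w ≠ 1) : ∃ i, hd w = some i := by
  cases h : hd w with
  | none => exact absurd (hd_eq_none_iff.mp h) hw
  | some i => exact ⟨i, rfl⟩

lemma cancel_left (i : Fin L) (w : W L) : σ i * (σ i * w) = w :=
  (cs L).simple_mul_simple_cancel_left i

lemma hd_simple_mul_of_not_hd {i : Fin L} {w : W L} (h : hd w ≠ some i) :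
    hd (σ i * w) = some i := by
  rw [hd] at h
  rw [hd, nf_simple_mul]
  rcases hnf : nf w with ⟨l, hl⟩
  rw [hnf] at h
  match l, hl with
  | [], _ => simp [pf]
  | j :: t, hl =>
    have : ¬ i = j := by intro hh; subst hh; simp at h
    simp [pf, this]

lemma len_sphere_finite (n : ℕ) : Finite {w : W L // len w = n} := by
  have : Function.Injective (fun w : {w : W L // len w = n} =>
      (⟨(nf w.1).1, by rw [← len_nf]; exact w.2⟩ : List.Vector (Fin L) n)) := by
    haveI := 0
    intro a b hab
    apply Subtype.ext
    apply nf_injective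
    apply Subtype.ext
    simpa using congrArg Subtype.val hab
  haveI fin : Finite (List.Vector (Fin L) n) := Finite.of_fintype _
  exact @Finite.of_injective _ _ fin _ this


lemma len_inv (w : W L) : len w⁻¹ = len w := (cs L).length_inv w

lemma simple_inv (i : Fin L) : (σ i)⁻¹ = σ i := ((cs L).inv_simple i)

lemma mul_simple_inv (w : W L) (i : Fin L) : (w * σ i)⁻¹ = σ i * w⁻¹ := by
  rw [mul_inv_rev, simple_inv]

lemma rdescent_iff {i : Fin L} {w : W L} :
    len (w * σ i) < len w ↔ hd w⁻¹ = some i := by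
  rw [← len_inv (w * σ i), mul_simple_inv, ← len_inv w]
  exact descent_iff

lemma len_mul_simple_of_hd {i : Fin L} {w : W L} (h : hd w⁻¹ = some i) :
    len (w * σ i) + 1 = len w := by
  rw [← len_inv (w * σ i), mul_simple_inv, ← len_inv w]
  exact len_simple_mul_of_hd h

lemma len_mul_simple_of_not_hd {i : Fin L} {w : W L} (h : hd w⁻¹ ≠ some i) :
    len (w * σ i) = len w + 1 := by
  rw [← len_inv (w * σ i), mul_simple_inv, ← len_inv w]
  exact len_simple_mul_of_not_hd h

lemma cancel_right (w : W L) (i : Fin L) : w * σ i * σ i = w :=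
  (cs L).simple_mul_simple_cancel_right i

lemma delta_hasSum (f : H L) :
    HasSum (fun w : W L => (f w : ℂ) • δ w) f := by
  classical
  have h := lp.hasSum_single (E := fun _ : W L => ℂ) (p := 2) (by norm_num) f
  convert h using 2 with w
  rw [δ]
  rw [← lp.single_smul]
  norm_num

lemma clm_ext_delta {A B : H L →L[ℂ] H L} (h : ∀ w, A (δ w) = B (δ w)) : A = B := by
  apply ContinuousLinearMap.ext
  intro f
  have hs := delta_hasSum f
  have hA : HasSum (fun w : W L => (f w : ℂ) • A (δ w)) (A f) := by
    simpa using A.hasSum hs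
  have hB : HasSum (fun w : W L => (f w : ℂ) • B (δ w)) (B f) := by
    simpa using B.hasSum hs
  rw [← hA.tsum_eq, ← hB.tsum_eq]
  exact tsum_congr fun w => by rw [h w]


lemma len_dichotomy (i : Fin L) (w : W L) :
    len (σ i * w) < len w ∨ len (σ i * w) = len w + 1 := by
  by_cases h : hd w = some i
  · left; exact descent_iff.mpr h
  · right; exact len_simple_mul_of_not_hd h

lemma len_simple (i : Fin L) : len (σ i) = 1 := (cs L).length_simple i

lemma len_mul_le (u v : W L) : len (u * v) ≤ len u + len v := (cs L).length_mul_le u v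

section Ops

variable {p : ℝ} {T : Fin L → H L →L[ℂ] H L}
  (hT : ∀ (s : Fin L) (w : W L),
      T s (δ w) =
        if len (σ s * w) < len w then δ (σ s * w) + (p : ℂ) • δ w else δ (σ s * w))
  {Tw : W L → H L →L[ℂ] H L} (hTw1 : Tw 1 = 1)
  (hTwrec : ∀ (s : Fin L) (w : W L), len (σ s * w) < len w →
      Tw w = T s ∘L Tw (σ s * w))

include hT in
lemma Tsq (i : Fin L) : T i * T i = 1 + (p : ℂ) • T i := by
  apply clm_ext_delta
  intro w
  rcases len_dichotomy i w with hlt | heq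
  · have hnot : ¬ len (σ i * (σ i * w)) < len (σ i * w) := by
      rw [cancel_left]; omega
    simp only [ContinuousLinearMap.mul_apply, hT, if_pos hlt, map_add, map_smul,
      hT, if_neg hnot, cancel_left, ContinuousLinearMap.add_apply,
      ContinuousLinearMap.one_apply, ContinuousLinearMap.smul_apply, if_pos hlt]
    rw [if_neg (by omega : ¬ len w < len (σ i * w))]
  · have hnot : ¬ len (σ i * w) < len w := by omega
    have hlt2 : len (σ i * (σ i * w)) < len (σ i * w) := by
      rw [cancel_left]; omega
    simp only [ContinuousLinearMap.mul_apply, hT, if_neg hnot, if_pos hlt2, cancel_left,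
      ContinuousLinearMap.add_apply, ContinuousLinearMap.one_apply,
      ContinuousLinearMap.smul_apply]
    rw [if_pos (by omega : len w < len (σ i * w))]

include hTw1 hTwrec in
lemma Tw_simple (i : Fin L) : Tw (σ i) = T i := by
  have h1 : σ i * σ i = 1 := (cs L).simple_mul_simple_self i
  have h0 : len (σ i * σ i) < len (σ i) := by
    rw [h1, len_one', len_simple]; norm_num
  rw [hTwrec i (σ i) h0, h1, hTw1]
  exact ContinuousLinearMap.comp_id _

include hTwrec in
lemma T_mul_Tw_asc {i : Fin L} {w : W L} (h : len w < len (σ i * w)) :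
    T i * Tw w = Tw (σ i * w) := by
  have hdesc : len (σ i * (σ i * w)) < len (σ i * w) := by rw [cancel_left]; omega
  rw [hTwrec i (σ i * w) hdesc, cancel_left]
  rfl

include hT hTwrec in
lemma T_mul_Tw_desc {i : Fin L} {w : W L} (h : len (σ i * w) < len w) :
    T i * Tw w = Tw (σ i * w) + (p : ℂ) • Tw w := by
  have hrec : Tw w = T i * Tw (σ i * w) := hTwrec i w h
  calc T i * Tw w = T i * (T i * Tw (σ i * w)) := by rw [hrec]
    _ = (T i * T i) * Tw (σ i * w) := by rw [mul_assoc]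
    _ = (1 + (p : ℂ) • T i) * Tw (σ i * w) := by rw [Tsq hT]
    _ = Tw (σ i * w) + (p : ℂ) • (T i * Tw (σ i * w)) := by
        rw [add_mul, one_mul, smul_mul_assoc]
    _ = Tw (σ i * w) + (p : ℂ) • Tw w := by rw [← hrec]

include hTw1 hTwrec in
lemma Tw_mul : ∀ (n : ℕ) (u v : W L), len u = n → len (u * v) = len u + len v →
    Tw (u * v) = Tw u * Tw v := by
  intro n
  induction n with
  | zero =>
    intro u v hu _
    have : u = 1 := len_eq_zero_iff.mp hu
    subst this
    rw [one_mul, hTw1, one_mul]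
  | succ n ih =>
    intro u v hu hlen
    have hune : u ≠ 1 := by intro h; subst h; rw [len_one'] at hu; omega
    obtain ⟨i, hi⟩ := hd_isSome_of_ne_one hune
    have hdesc : len (σ i * u) + 1 = len u := len_simple_mul_of_hd hi
    let u' := σ i * u
    have hu' : u' = σ i * u := rfl
    have hdesc' : len u' + 1 = len u := hdesc
    have hcan : σ i * u' = u := cancel_left i u
    have huv : σ i * (u' * v) = u * v := by rw [← mul_assoc, hcan]
    have hle : len (u' * v) ≤ len u' + len v := len_mul_le u' v
    have hc2 : σ i * (u * v) = u' * v := by rw [← huv, cancel_left]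
    have hlen' : len (u' * v) = len u' + len v := by
      rcases len_dichotomy i (u' * v) with hl | he
      · rw [huv] at hl; omega
      · rw [huv] at he; omega
    have hlt : len (σ i * (u * v)) < len (u * v) := by rw [hc2]; omega
    have hTu : Tw u = T i * Tw u' := hTwrec i u (by omega)
    calc Tw (u * v) = T i * Tw (σ i * (u * v)) := hTwrec i (u * v) hlt
      _ = T i * Tw (u' * v) := by rw [hc2]
      _ = T i * (Tw u' * Tw v) := by rw [ih u' v (by omega) hlen']
      _ = (T i * Tw u') * Tw v := by rw [mul_assoc]
      _ = Tw u * Tw v := by rw [← hTu]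

include hTw1 hTwrec in
lemma Tw_mul_T_asc {i : Fin L} {w : W L} (h : len w < len (w * σ i)) :
    Tw w * T i = Tw (w * σ i) := by
  have hl : len (w * σ i) = len w + len (σ i) := by
    have h2 : len (σ i * w⁻¹) = len (w * σ i) := by rw [← mul_simple_inv, len_inv]
    rcases len_dichotomy i w⁻¹ with hl | he
    · rw [h2, len_inv] at hl; omega
    · rw [h2, len_inv] at he; rw [len_simple]; omega
  rw [Tw_mul hTw1 hTwrec (len w) w (σ i) rfl hl, Tw_simple hTw1 hTwrec i]

include hT hTw1 hTwrec in
lemma Tw_mul_T_desc {i : Fin L} {w : W L} (h : len (w * σ i) < len w) :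
    Tw w * T i = Tw (w * σ i) + (p : ℂ) • Tw w := by
  have hcan : (w * σ i) * σ i = w := cancel_right w i
  have hl : len ((w * σ i) * σ i) = len (w * σ i) + len (σ i) := by
    rw [hcan, len_simple]
    have hne : len (w * σ i) ≠ len w := (cs L).length_mul_simple_ne w i
    have hle := len_mul_le w (σ i)
    have hle2 := len_mul_le (w * σ i) (σ i)
    rw [hcan, len_simple] at hle2
    rw [len_simple] at hle
    show len w = len (w * σ i) + 1
    omega
  have hrec : Tw w = Tw (w * σ i) * T i := by
    conv_lhs => rw [← hcan]
    rw [Tw_mul hTw1 hTwrec (len (w * σ i)) (w * σ i) (σ i) rfl hl,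
      Tw_simple hTw1 hTwrec i]
  calc Tw w * T i = Tw (w * σ i) * (T i * T i) := by rw [hrec, mul_assoc]
    _ = Tw (w * σ i) * (1 + (p : ℂ) • T i) := by rw [Tsq hT]
    _ = Tw (w * σ i) + (p : ℂ) • (Tw (w * σ i) * T i) := by
        rw [mul_add, mul_one, mul_smul_comm]
    _ = Tw (w * σ i) + (p : ℂ) • Tw w := by rw [← hrec]

end Ops


section Comb
variable {M : Type*} [AddCommMonoid M]

lemma sphere_ne_one {m : ℕ} (hm : 1 ≤ m) (w : {w : W L // len w = m}) : w.1 ≠ 1 := by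
  intro h
  have := w.2
  rw [h, len_one'] at this
  omega

lemma sum_comb (hL : 0 < L) (act : Fin L → W L → W L)
    (hinv : ∀ i w, act i (act i w) = w)
    (hdich : ∀ i w, len (act i w) + 1 = len w ∨ len (act i w) = len w + 1)
    (huniq : ∀ w : W L, w ≠ 1 → ∃! i, len (act i w) < len w)
    (m : ℕ) (hm : 1 ≤ m)
    (G : Fin L → W L → M) (F D : W L → M)
    (hdesc : ∀ i w, len w = m → len (act i w) < len w → G i w = F (act i w) + D w)
    (hasc : ∀ i w, len w = m → len w < len (act i w) → G i w = F (act i w))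
    [Fintype {w : W L // len w = m}] [Fintype {w : W L // len w = m + 1}]
    [Fintype {w : W L // len w = m - 1}] :
    ∑ w : {w : W L // len w = m}, ∑ i : Fin L, G i w.1 =
      (∑ v : {w : W L // len w = m + 1}, F v.1) +
      (∑ w : {w : W L // len w = m}, D w.1) +
      (if m = 1 then L else L - 1) • (∑ u : {w : W L // len w = m - 1}, F u.1) := by
  classical
  -- the unique descent
  set d : W L → Fin L := fun w =>
    if hw : w = 1 then ⟨0, hL⟩ else (huniq w hw).choose with hd_def
  have hd1 : ∀ w : W L, w ≠ 1 → len (act (d w) w) < len w := by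
    intro w hw
    rw [hd_def]
    simp only [dif_neg hw]
    exact (huniq w hw).choose_spec.1
  have hd2 : ∀ (w : W L) (i : Fin L), len (act i w) < len w → i = d w := by
    intro w i hi
    have hw : w ≠ 1 := by
      intro h; subst h; rw [len_one'] at hi; omega
    rw [hd_def]
    simp only [dif_neg hw]
    exact (huniq w hw).choose_spec.2 i hi
  have hasc_len : ∀ (w : W L) (i : Fin L), i ≠ d w → len (act i w) = len w + 1 := by
    intro w i hne
    rcases hdich i w with h | h
    · exact absurd (hd2 w i (by omega)) hne
    · exact h
  have hdesc_len : ∀ (w : W L), w ≠ 1 → len (act (d w) w) + 1 = len w := by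
    intro w hw
    rcases hdich (d w) w with h | h
    · exact h
    · have := hd1 w hw; omega
  -- split each inner sum at the descent
  have step1 : ∀ w : {w : W L // len w = m},
      ∑ i : Fin L, G i w.1 =
        (F (act (d w.1) w.1) + D w.1) +
          ∑ i ∈ Finset.univ.erase (d w.1), F (act i w.1) := by
    intro w
    have hw1 : w.1 ≠ 1 := sphere_ne_one hm w
    rw [← Finset.add_sum_erase Finset.univ _ (Finset.mem_univ (d w.1))]
    congr 1
    · exact hdesc _ _ w.2 (hd1 w.1 hw1)
    · apply Finset.sum_congr rfl
      intro i hi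
      have hne : i ≠ d w.1 := (Finset.mem_erase.mp hi).1
      exact hasc i w.1 w.2 (by have := hasc_len w.1 i hne; omega)
  rw [Finset.sum_congr rfl (fun w _ => step1 w)]
  rw [Finset.sum_add_distrib, Finset.sum_add_distrib]
  have hasc2 : ∀ (i : Fin L) (u : W L), ¬ len (act i u) < len u →
      len (act i u) = len u + 1 := by
    intro i u hnd
    rcases hdich i u with h | h
    · omega
    · exact h
  -- part A : ascent part equals the sphere m+1
  have partA : ∑ w : {w : W L // len w = m},
      ∑ i ∈ Finset.univ.erase (d w.1), F (act i w.1) =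
      ∑ v : {w : W L // len w = m + 1}, F v.1 := by
    rw [← Finset.sum_sigma (Finset.univ : Finset {w : W L // len w = m})
      (fun w => Finset.univ.erase (d w.1)) (fun x => F (act x.2 x.1.1))]
    refine Finset.sum_bij'
      (i := fun (x : Σ _ : {w : W L // len w = m}, Fin L) (hx : x ∈ _) =>
        (⟨act x.2 x.1.1, by
          have hne : x.2 ≠ d x.1.1 :=
            (Finset.mem_erase.mp (Finset.mem_sigma.mp hx).2).1
          rw [hasc_len x.1.1 x.2 hne, x.1.2]⟩ : {w : W L // len w = m + 1}))
      (j := fun v (hv : v ∈ Finset.univ) =>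
        ⟨⟨act (d v.1) v.1, by
          have hv1 : v.1 ≠ 1 := sphere_ne_one (by omega) v
          have := hdesc_len v.1 hv1
          rw [v.2] at this
          omega⟩, d v.1⟩)
      ?_ ?_ ?_ ?_ ?_
    · intro a ha; exact Finset.mem_univ _
    · intro v hv
      rw [Finset.mem_sigma, Finset.mem_erase]
      refine ⟨Finset.mem_univ _, ?_, Finset.mem_univ _⟩
      intro heq
      have hv1 : v.1 ≠ 1 := sphere_ne_one (by omega) v
      have hlen_w : len (act (d v.1) v.1) = m := by
        have := hdesc_len v.1 hv1
        rw [v.2] at this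
        omega
      have hw1 : act (d v.1) v.1 ≠ 1 := by
        intro h
        rw [h, len_one'] at hlen_w
        omega
      have h1 := hd1 _ hw1
      rw [← heq, hinv, v.2, hlen_w] at h1
      omega
    · rintro ⟨w, i⟩ ha
      have hmem := Finset.mem_sigma.mp ha
      have hne : i ≠ d w.1 := (Finset.mem_erase.mp hmem.2).1
      have hlen : len (act i w.1) = m + 1 := by rw [hasc_len w.1 i hne, w.2]
      have hdesc_i : len (act i (act i w.1)) < len (act i w.1) := by
        rw [hinv, w.2, hlen]
        omega
      have hdv : d (act i w.1) = i := (hd2 _ _ hdesc_i).symm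
      refine Sigma.ext (Subtype.ext ?_) (heq_of_eq ?_)
      · show act (d (act i w.1)) (act i w.1) = w.1
        rw [hdv, hinv]
      · show d (act i w.1) = i
        exact hdv
    · intro v hv
      exact Subtype.ext (hinv _ _)
    · intro a ha
      rfl
  -- part B : descent part equals the sphere m-1 with multiplicity
  have partB : ∑ w : {w : W L // len w = m}, F (act (d w.1) w.1) =
      (if m = 1 then L else L - 1) • ∑ u : {w : W L // len w = m - 1}, F u.1 := by
    have hstep : ∑ w : {w : W L // len w = m}, F (act (d w.1) w.1) =
        ∑ x ∈ (Finset.univ : Finset {w : W L // len w = m - 1}).sigma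
          (fun u => Finset.univ.filter (fun i => ¬ len (act i u.1) < len u.1)),
          F x.1.1 := by
      refine Finset.sum_bij'
        (i := fun (w : {w : W L // len w = m}) (hw : w ∈ Finset.univ) =>
          (⟨⟨act (d w.1) w.1, by
            have hw1 : w.1 ≠ 1 := sphere_ne_one hm w
            have := hdesc_len w.1 hw1
            rw [w.2] at this
            omega⟩, d w.1⟩ :
            Σ _ : {w : W L // len w = m - 1}, Fin L))
        (j := fun x hx => ⟨act x.2 x.1.1, by
          have hnd : ¬ len (act x.2 x.1.1) < len x.1.1 :=
            (Finset.mem_filter.mp (Finset.mem_sigma.mp hx).2).2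
          rw [hasc2 x.2 x.1.1 hnd, x.1.2]
          omega⟩)
        ?_ ?_ ?_ ?_ ?_
      · intro w hw
        rw [Finset.mem_sigma]
        refine ⟨Finset.mem_univ _, ?_⟩
        rw [Finset.mem_filter]
        refine ⟨Finset.mem_univ _, ?_⟩
        show ¬ len (act (d w.1) (act (d w.1) w.1)) < len (act (d w.1) w.1)
        rw [hinv]
        have hw1 : w.1 ≠ 1 := sphere_ne_one hm w
        have := hd1 w.1 hw1
        omega
      · intro x hx
        exact Finset.mem_univ _
      · intro w hw
        exact Subtype.ext (hinv _ _)
      · rintro ⟨u, i⟩ hx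
        have hnd : ¬ len (act i u.1) < len u.1 :=
          (Finset.mem_filter.mp (Finset.mem_sigma.mp hx).2).2
        have hlen : len (act i u.1) = m := by
          rw [hasc2 i u.1 hnd, u.2]
          omega
        have hdesc_i : len (act i (act i u.1)) < len (act i u.1) := by
          rw [hinv, u.2, hlen]
          omega
        have hdv : d (act i u.1) = i := (hd2 _ _ hdesc_i).symm
        refine Sigma.ext (Subtype.ext ?_) (heq_of_eq ?_)
        · show act (d (act i u.1)) (act i u.1) = u.1
          rw [hdv, hinv]
        · show d (act i u.1) = i
          exact hdv
      · intro w hw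
        rfl
    rw [hstep, Finset.sum_sigma]
    have hcard : ∀ u : {w : W L // len w = m - 1},
        (Finset.univ.filter (fun i => ¬ len (act i u.1) < len u.1)).card =
          if m = 1 then L else L - 1 := by
      intro u
      by_cases hm1 : m = 1
      · rw [if_pos hm1]
        have hu1 : u.1 = 1 := by
          apply len_eq_zero_iff.mp
          rw [u.2, hm1]
        have : Finset.univ.filter (fun i => ¬ len (act i u.1) < len u.1) =
            Finset.univ := by
          apply Finset.filter_true_of_mem
          intro i _
          rw [hu1, len_one']
          omega
        rw [this, Finset.card_univ, Fintype.card_fin]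
      · rw [if_neg hm1]
        have hu1 : u.1 ≠ 1 := by
          intro h
          have := u.2
          rw [h, len_one'] at this
          omega
        have hdfilter : Finset.univ.filter (fun i => len (act i u.1) < len u.1) =
            {d u.1} := by
          ext i
          simp only [Finset.mem_filter, Finset.mem_univ, true_and, Finset.mem_singleton]
          constructor
          · exact hd2 u.1 i
          · rintro rfl
            exact hd1 u.1 hu1
        have htot := Finset.card_filter_add_card_filter_not
          (s := (Finset.univ : Finset (Fin L)))
          (p := fun i => len (act i u.1) < len u.1)
        rw [hdfilter, Finset.card_singleton, Finset.card_univ, Fintype.card_fin] at htot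
        omega
    calc ∑ u : {w : W L // len w = m - 1},
          ∑ _i ∈ Finset.univ.filter (fun i => ¬ len (act i u.1) < len u.1), F u.1
        = ∑ u : {w : W L // len w = m - 1},
            (if m = 1 then L else L - 1) • F u.1 := by
          apply Finset.sum_congr rfl
          intro u _
          rw [Finset.sum_const, hcard u]
      _ = (if m = 1 then L else L - 1) • ∑ u : {w : W L // len w = m - 1}, F u.1 := by
          rw [Finset.smul_sum]
  rw [partA, partB]
  abel

end Comb

lemma nf_simple (i : Fin L) : nf (σ i) = ⟨[i], List.isChain_singleton i⟩ := by
  rw [show σ i = (cs L).wordProd [i] from ((cs L).wordProd_singleton i).symm, nf_wp]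
  exact List.isChain_singleton i

lemma sigma_inj : Function.Injective (σ : Fin L → W L) := by
  intro i j hij
  have := congrArg nf hij
  rw [nf_simple, nf_simple] at this
  simpa using congrArg Subtype.val this

lemma act_left_dich (i : Fin L) (w : W L) :
    len (σ i * w) + 1 = len w ∨ len (σ i * w) = len w + 1 := by
  by_cases h : hd w = some i
  · left; exact len_simple_mul_of_hd h
  · right; exact len_simple_mul_of_not_hd h

lemma act_left_uniq (w : W L) (hw : w ≠ 1) : ∃! i, len (σ i * w) < len w := by
  obtain ⟨i, hi⟩ := hd_isSome_of_ne_one hw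
  refine ⟨i, descent_iff.mpr hi, fun j hj => ?_⟩
  have hj' := descent_iff.mp hj
  rw [hi] at hj'
  exact Option.some_inj.mp hj'.symm

lemma act_right_dich (i : Fin L) (w : W L) :
    len (w * σ i) + 1 = len w ∨ len (w * σ i) = len w + 1 := by
  by_cases h : hd w⁻¹ = some i
  · left; exact len_mul_simple_of_hd h
  · right; exact len_mul_simple_of_not_hd h

lemma act_right_uniq (w : W L) (hw : w ≠ 1) : ∃! i, len (w * σ i) < len w := by
  obtain ⟨i, hi⟩ := hd_isSome_of_ne_one (by simpa using hw : w⁻¹ ≠ 1)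
  refine ⟨i, rdescent_iff.mpr hi, fun j hj => ?_⟩
  have hj' := rdescent_iff.mp hj
  rw [hi] at hj'
  exact Option.some_inj.mp hj'.symm

lemma act_right_inv (i : Fin L) (w : W L) : (w * σ i) * σ i = w := cancel_right w i



theorem statement3
    (L : ℕ) (hL : 3 ≤ L) (q p : ℝ) (hq : 0 < q) (hq1 : q ≤ 1)
    (hp : p = (q - 1) / Real.sqrt q)
    (T : Fin L → H L →L[ℂ] H L)
    (hT : ∀ (s : Fin L) (w : W L),
      T s (δ w) =
        if len (σ s * w) < len w then δ (σ s * w) + (p : ℂ) • δ w else δ (σ s * w))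
    (h : H L →L[ℂ] H L) (hh : h = ∑ s, T s)
    (Tw : W L → H L →L[ℂ] H L) (hTw1 : Tw 1 = 1)
    (hTwrec : ∀ (s : Fin L) (w : W L), len (σ s * w) < len w →
      Tw w = T s ∘L Tw (σ s * w))
    (hn : ℕ → H L →L[ℂ] H L)
    (hhn : ∀ n : ℕ, hn n = ∑' w : {w : W L // len w = n}, Tw (w : W L)) :
    (∀ m : ℕ, 1 ≤ m →
      h * hn m = hn m * h ∧
      h * hn m = hn (m + 1) + (p : ℂ) • hn m +
        ((if m = 1 then (L : ℂ) + 1 else (L : ℂ)) - 1) • hn (m - 1))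
    ∧ h * h = hn 2 + (p : ℂ) • h + (L : ℂ) • (1 : H L →L[ℂ] H L) := by
  haveI inst : ∀ n : ℕ, Fintype {w : W L // len w = n} := fun n =>
    @Fintype.ofFinite _ (len_sphere_finite n)
  have hn_eq : ∀ n : ℕ, hn n = ∑ w : {w : W L // len w = n}, Tw w.1 := by
    intro n
    rw [hhn n, tsum_fintype]
  have hcoef : ∀ x : H L →L[ℂ] H L, ∀ m : ℕ, 1 ≤ m →
      ((if m = 1 then (L : ℂ) + 1 else (L : ℂ)) - 1) • x
        = (if m = 1 then L else L - 1) • x := by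
    intro x m hm
    by_cases hm1 : m = 1
    · rw [if_pos hm1, if_pos hm1, add_sub_cancel_right, Nat.cast_smul_eq_nsmul]
    · rw [if_neg hm1, if_neg hm1]
      have : (L : ℂ) - 1 = ((L - 1 : ℕ) : ℂ) := by
        rw [Nat.cast_sub (by omega : 1 ≤ L)]
        push_cast
        ring
      rw [this, Nat.cast_smul_eq_nsmul]
  have key : ∀ m : ℕ, 1 ≤ m → h * hn m = hn (m + 1) + (p : ℂ) • hn m +
      ((if m = 1 then (L : ℂ) + 1 else (L : ℂ)) - 1) • hn (m - 1) := by
    intro m hm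
    rw [hh, hn_eq m, Finset.sum_mul]
    rw [Finset.sum_congr rfl (fun s _ => Finset.mul_sum Finset.univ _ (T s)), Finset.sum_comm]
    rw [sum_comb (by omega : 0 < L) (fun i w => σ i * w) cancel_left act_left_dich
      act_left_uniq m hm (fun i w => T i * Tw w) Tw (fun w => (p : ℂ) • Tw w)
      (fun i w _ hlt => T_mul_Tw_desc hT hTwrec hlt)
      (fun i w _ hlt => T_mul_Tw_asc hTwrec hlt)]
    rw [← Finset.smul_sum, ← hn_eq (m + 1), ← hn_eq (m - 1), ← hn_eq m, hcoef _ m hm]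
  have key2 : ∀ m : ℕ, 1 ≤ m → hn m * h = hn (m + 1) + (p : ℂ) • hn m +
      ((if m = 1 then (L : ℂ) + 1 else (L : ℂ)) - 1) • hn (m - 1) := by
    intro m hm
    rw [hh, hn_eq m, Finset.sum_mul]
    rw [Finset.sum_congr rfl (fun w _ => Finset.mul_sum Finset.univ _ (Tw w.1))]
    rw [sum_comb (by omega : 0 < L) (fun i w => w * σ i) act_right_inv act_right_dich
      act_right_uniq m hm (fun i w => Tw w * T i) Tw (fun w => (p : ℂ) • Tw w)
      (fun i w _ hlt => Tw_mul_T_desc hT hTw1 hTwrec hlt)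
      (fun i w _ hlt => Tw_mul_T_asc hTw1 hTwrec hlt)]
    rw [← Finset.smul_sum, ← hn_eq (m + 1), ← hn_eq (m - 1), ← hn_eq m, hcoef _ m hm]
  have hn1_eq : hn 1 = h := by
    rw [hn_eq 1, hh]
    refine Finset.sum_nbij'
      (i := fun w : {w : W L // len w = 1} => ((cs L).length_eq_one_iff.mp w.2).choose)
      (j := fun i : Fin L => (⟨σ i, len_simple i⟩ : {w : W L // len w = 1}))
      (fun _ _ => Finset.mem_univ _) (fun _ _ => Finset.mem_univ _) ?_ ?_ ?_
    · intro w _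
      exact Subtype.ext ((cs L).length_eq_one_iff.mp w.2).choose_spec.symm
    · intro i _
      exact sigma_inj ((cs L).length_eq_one_iff.mp (len_simple i)).choose_spec.symm
    · intro w _
      have hspec := ((cs L).length_eq_one_iff.mp w.2).choose_spec
      conv_lhs => rw [show w.1 = σ (((cs L).length_eq_one_iff.mp w.2).choose) from hspec]
      exact Tw_simple hTw1 hTwrec _
  have hn0_eq : hn 0 = 1 := by
    rw [hhn 0, tsum_eq_single (⟨1, len_one'⟩ : {w : W L // len w = 0})]
    · exact hTw1
    · intro b' hb'
      exact absurd (Subtype.ext (len_eq_zero_iff.mp b'.2)) hb'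
  refine ⟨fun m hm => ⟨(key m hm).trans (key2 m hm).symm, key m hm⟩, ?_⟩
  have h11 := key 1 le_rfl
  rw [hn1_eq] at h11
  simp only [Nat.reduceAdd, Nat.reduceSub, reduceIte, add_sub_cancel_right] at h11
  rw [hn0_eq] at h11
  exact h11


end UCoxMasa
end
end

section
/- Let l ≥ 1 and let ξ ∈ V_l. Then q_l(h(q_{l+1}(h ξ))) = (L−1)·ξ. -/
noncomputable section

open scoped ComplexInnerProductSpace

namespace UCoxMasaAux

open UCoxMasa

variable {L : ℕ}

/-- Alternating words in `Fin L`. -/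
abbrev Alt (L : ℕ) : Type := {l : List (Fin L) // l.Chain' (· ≠ ·)}

/-- The action of the generator `i` on alternating words. -/
def phiFun (i : Fin L) (l : Alt L) : Alt L :=
  if h : l.1.head? = some i then ⟨l.1.tail, l.2.tail⟩
  else ⟨i :: l.1, List.isChain_cons.mpr ⟨fun y hy hiy => h (by rw [hy, hiy]), l.2⟩⟩

lemma phiFun_invol (i : Fin L) : Function.Involutive (phiFun i) := by
  intro l
  unfold phiFun
  split
  · rename_i h1
    obtain ⟨t, ht⟩ : ∃ t, l.1 = i :: t := by
      cases hl : l.1 with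
      | nil => simp [hl] at h1
      | cons j r =>
        have h1' : j = i := by rw [hl] at h1; simpa using h1
        exact ⟨r, by rw [h1']⟩
    have htail : l.1.tail = t := by rw [ht]; rfl
    have hhead : t.head? ≠ some i := by
      cases t with
      | nil => simp
      | cons j r =>
        have : i ≠ j := (List.isChain_cons_cons.mp (ht ▸ l.2)).1
        simpa using fun hij => this hij.symm
    rw [dif_neg (by simpa [htail] using hhead)]
    apply Subtype.ext
    simp [htail, ht]
  · rw [dif_pos (by simp)]
    apply Subtype.ext
    rfl

/-- `phiFun i` as a permutation. -/
def eperm (i : Fin L) : Equiv.Perm (Alt L) := (phiFun_invol i).toPerm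

lemma eperm_liftable : CoxeterMatrix.IsLiftable (Mat L) (eperm (L := L)) := by
  intro i j
  by_cases hij : i = j
  · subst hij
    have : Mat L i i = 1 := by simp [Mat]
    rw [this, pow_one]
    refine Equiv.ext fun x => ?_
    exact phiFun_invol i x
  · have : Mat L i j = 0 := by simp [Mat, hij]
    rw [this, pow_zero]

/-- The representation of `W L` on alternating words. -/
def ρ : W L →* Equiv.Perm (Alt L) := (cs L).lift ⟨eperm, eperm_liftable⟩

lemma ρ_simple (i : Fin L) : ρ (σ i) = eperm i := (cs L).lift_apply_simple eperm_liftable i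

/-- The normal form of `w`. -/
def wd (w : W L) : Alt L := ρ w ⟨[], List.isChain_nil⟩

lemma wd_simple_mul (i : Fin L) (w : W L) : wd (σ i * w) = phiFun i (wd w) := by
  unfold wd
  rw [map_mul, ρ_simple]
  rfl

lemma wd_wordProd (ω : List (Fin L)) :
    (cs L).wordProd (wd ((cs L).wordProd ω)).1 = (cs L).wordProd ω ∧
      (wd ((cs L).wordProd ω)).1.length ≤ ω.length := by
  induction ω with
  | nil =>
    have : wd ((cs L).wordProd ([] : List (Fin L))) = ⟨[], List.isChain_nil⟩ := by
      rw [CoxeterSystem.wordProd_nil]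
      unfold wd
      rw [map_one]
      rfl
    rw [this]
    simp
  | cons i ω ih =>
    rw [CoxeterSystem.wordProd_cons]
    have hσ : (cs L).simple i = σ i := rfl
    rw [hσ, wd_simple_mul]
    set t := wd ((cs L).wordProd ω) with ht
    unfold phiFun
    split
    · rename_i h1
      obtain ⟨r, hr⟩ : ∃ r, t.1 = i :: r := by
        cases hl : t.1 with
        | nil => simp [hl] at h1
        | cons j s =>
          have h1' : j = i := by rw [hl] at h1; simpa using h1
          exact ⟨s, by rw [h1']⟩
      have h3 : (↑t : List (Fin L)).tail = r := by rw [hr]; rfl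
      constructor
      · have hih := ih.1
        rw [hr, CoxeterSystem.wordProd_cons] at hih
        have h2 : (cs L).wordProd r = (cs L).simple i * (cs L).wordProd ω := by
          rw [← hih, ← mul_assoc, CoxeterSystem.simple_mul_simple_self, one_mul]
        show (cs L).wordProd (↑t : List (Fin L)).tail = _
        rw [h3, h2]
        rfl
      · show ((↑t : List (Fin L)).tail).length ≤ (i :: ω).length
        rw [h3]
        have h4 := ih.2
        rw [hr] at h4
        simp only [List.length_cons] at h4 ⊢
        omega
    · constructor
      · show (cs L).wordProd (i :: (↑t : List (Fin L))) = _
        rw [CoxeterSystem.wordProd_cons, ih.1]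
        rfl
      · show (i :: (↑t : List (Fin L))).length ≤ (i :: ω).length
        simp only [List.length_cons]
        exact Nat.succ_le_succ ih.2

lemma wd_prod (w : W L) : (cs L).wordProd (wd w).1 = w := by
  obtain ⟨ω, rfl⟩ := (cs L).wordProd_surjective w
  exact (wd_wordProd ω).1

lemma wd_length (w : W L) : (wd w).1.length = len w := by
  apply le_antisymm
  · obtain ⟨ω, hω, rfl⟩ := (cs L).exists_reduced_word w
    exact (wd_wordProd ω).2.trans_eq hω.eq.symm
  · have := (cs L).length_wordProd_le (wd w).1
    rw [wd_prod] at this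
    exact this

lemma len_of_head (w : W L) (i : Fin L) (h : (wd w).1.head? = some i) :
    len (σ i * w) + 1 = len w := by
  rw [← wd_length, ← wd_length, wd_simple_mul]
  unfold phiFun
  rw [dif_pos h]
  have hne : (wd w).1 ≠ [] := by intro hc; rw [hc] at h; simp at h
  show ((↑(wd w) : List (Fin L)).tail).length + 1 = _
  rw [List.length_tail]
  have := List.length_pos_iff.mpr hne
  omega

lemma len_of_not_head (w : W L) (i : Fin L) (h : (wd w).1.head? ≠ some i) :
    len (σ i * w) = len w + 1 := by
  rw [← wd_length, ← wd_length, wd_simple_mul]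
  unfold phiFun
  rw [dif_neg h]
  simp

lemma head_simple_mul (w : W L) (i : Fin L) (h : (wd w).1.head? ≠ some i) :
    (wd (σ i * w)).1.head? = some i := by
  rw [wd_simple_mul]
  unfold phiFun
  rw [dif_neg h]
  rfl

end UCoxMasaAux


namespace UCoxMasa

open UCoxMasaAux

theorem statement7
    (L : ℕ) (hL : 3 ≤ L) (q p : ℝ) (hq : 0 < q) (hq1 : q ≤ 1)
    (hp : p = (q - 1) / Real.sqrt q)
    (T : Fin L → H L →L[ℂ] H L)
    (hT : ∀ (s : Fin L) (w : W L),
      T s (δ w) =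
        if len (σ s * w) < len w then δ (σ s * w) + (p : ℂ) • δ w else δ (σ s * w))
    (h : H L →L[ℂ] H L) (hh : h = ∑ s, T s)
    (Q : ℕ → H L →L[ℂ] H L)
    (hQ : ∀ (l : ℕ) (w : W L), Q l (δ w) = if len w = l then δ w else 0)
    (l : ℕ) (hl : 1 ≤ l) (ξ : H L) (hξmem : ξ ∈ V L l) :
    Q l (h (Q (l + 1) (h ξ))) = ((L : ℂ) - 1) • ξ := by
  have key : ∀ w : W L, len w = l →
      Q l (h (Q (l + 1) (h (δ w)))) = ((L : ℂ) - 1) • δ w := by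
    intro w hw
    -- the unique left descent of w
    obtain ⟨i₀, hi₀⟩ : ∃ i₀, (wd w).1.head? = some i₀ := by
      cases hl' : (wd w).1 with
      | nil =>
        exfalso
        have := wd_length w
        rw [hl', hw] at this
        simp at this
        omega
      | cons j r => exact ⟨j, by simp [hl']⟩
    have hdesc : ∀ s : Fin L, len (σ s * w) < len w ↔ s = i₀ := by
      intro s
      constructor
      · intro hlt
        by_contra hne
        have : (wd w).1.head? ≠ some s := fun hc => hne (by
          rw [hc] at hi₀; exact (Option.some_injective _ hi₀))
        rw [len_of_not_head w s this] at hlt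
        omega
      · intro hs
        subst hs
        have := len_of_head w s hi₀
        omega
    -- Step 1: Q (l+1) (h (δ w))
    have step1 : Q (l + 1) (h (δ w)) =
        ∑ s : Fin L, if s = i₀ then 0 else δ (σ s * w) := by
      rw [hh, ContinuousLinearMap.sum_apply, map_sum]
      apply Finset.sum_congr rfl
      intro s _
      rw [hT s w]
      by_cases hs : s = i₀
      · rw [if_pos ((hdesc s).mpr hs), if_pos hs, map_add, map_smul, hQ, hQ]
        have h1 : len (σ s * w) ≠ l + 1 := by
          have := (hdesc s).mpr hs
          rw [hdesc] at this
          have := len_of_head w s (by rw [hs]; exact hi₀)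
          omega
        rw [if_neg h1, if_neg (by omega : len w ≠ l + 1)]
        simp
      · have hnd : ¬ len (σ s * w) < len w := fun hc => hs ((hdesc s).mp hc)
        rw [if_neg hnd, if_neg hs, hQ]
        have : len (σ s * w) = l + 1 := by
          rw [len_of_not_head w s (fun hc => hs (by
            rw [hc] at hi₀; exact (Option.some_injective _ hi₀))), hw]
        rw [if_pos this]
    -- Step 2: for each non-descent s, Q l (h (δ (σ s * w))) = δ w
    have step2 : ∀ s : Fin L, s ≠ i₀ → Q l (h (δ (σ s * w))) = δ w := by
      intro s hs
      have hhead : (wd w).1.head? ≠ some s := fun hc => hs (by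
        rw [hc] at hi₀; exact (Option.some_injective _ hi₀))
      have hu : len (σ s * w) = l + 1 := by rw [len_of_not_head w s hhead, hw]
      have huhead : (wd (σ s * w)).1.head? = some s := head_simple_mul w s hhead
      rw [hh, ContinuousLinearMap.sum_apply, map_sum]
      have hterm : ∀ t : Fin L, Q l (T t (δ (σ s * w))) =
          if t = s then δ w else 0 := by
        intro t
        rw [hT t (σ s * w)]
        by_cases hts : t = s
        · subst hts
          have hcancel : σ t * (σ t * w) = w := by
            rw [← mul_assoc]
            show (cs L).simple t * (cs L).simple t * w = w
            rw [CoxeterSystem.simple_mul_simple_self, one_mul]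
          have hlt : len (σ t * (σ t * w)) < len (σ t * w) := by
            rw [hcancel, hw, hu]; omega
          rw [if_pos hlt, map_add, map_smul, hQ, hQ, hcancel, hw, if_pos rfl, hu,
            if_neg (by omega : ¬ (l + 1 = l))]
          simp
        · have hthead : (wd (σ s * w)).1.head? ≠ some t := by
            rw [huhead]
            simpa using fun hc => hts hc.symm
          have hlen : len (σ t * (σ s * w)) = l + 2 := by
            rw [len_of_not_head _ t hthead, hu]
          have : ¬ len (σ t * (σ s * w)) < len (σ s * w) := by omega
          rw [if_neg this, if_neg hts, hQ, hlen, if_neg (by omega : ¬ (l + 2 = l))]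
      rw [Finset.sum_congr rfl (fun t _ => hterm t), Finset.sum_ite_eq' Finset.univ s
        (fun _ => δ w), if_pos (Finset.mem_univ s)]
    -- combine
    rw [step1, map_sum, map_sum]
    have : ∀ s : Fin L, Q l (h (if s = i₀ then 0 else δ (σ s * w))) =
        if s = i₀ then 0 else δ w := by
      intro s
      by_cases hs : s = i₀
      · simp [hs]
      · rw [if_neg hs, if_neg hs, step2 s hs]
    rw [Finset.sum_congr rfl (fun s _ => this s)]
    have hsplit : ∀ s : Fin L, (if s = i₀ then (0 : H L) else δ w) =
        δ w - (if s = i₀ then δ w else 0) := by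
      intro s; split <;> simp
    rw [Finset.sum_congr rfl (fun s _ => hsplit s), Finset.sum_sub_distrib,
      Finset.sum_const, Finset.sum_ite_eq' Finset.univ i₀ (fun _ => δ w),
      if_pos (Finset.mem_univ i₀)]
    rw [Finset.card_univ, Fintype.card_fin, sub_smul, one_smul]
    congr 1
    rw [← Nat.cast_smul_eq_nsmul ℂ]
  -- span induction
  have hlin : ∀ x y : H L,
      Q l (h (Q (l + 1) (h x))) = ((L : ℂ) - 1) • x →
      Q l (h (Q (l + 1) (h y))) = ((L : ℂ) - 1) • y →
      Q l (h (Q (l + 1) (h (x + y)))) = ((L : ℂ) - 1) • (x + y) := by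
    intro x y hx hy
    rw [map_add, map_add, map_add, map_add, hx, hy, smul_add]
  refine Submodule.span_induction ?_ ?_ ?_ ?_ hξmem
  · rintro x ⟨w, hw, rfl⟩
    exact key w hw
  · simp
  · intro x y _ _ hx hy
    exact hlin x y hx hy
  · intro a x _ hx
    rw [map_smul, map_smul, map_smul, map_smul, hx, smul_comm]

end UCoxMasa
end
end
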